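/- Let E be a real normed vector space, let β, γ ≥ 0 with β + γ < 1, let c > 0 and 0 ≤ ρ₀ < 1, let (η_t)_{t≥0} satisfy 0 ≤ η_t ≤ c·ρ₀^t for all t, let δ > 0, and let (d_t)_{t≥0} be a sequence in E with ‖d_t‖ ≤ δ for all t. Define (Δ_t) by Δ_0 = 0, Δ_1 = η_0·d_0, and Δ_{t+2} = β·Δ_{t+1} + γ·Δ_t + η_{t+1}·d_{t+1} for all t ≥ 0. Then there exist C > 0 and σ ∈ (0, 1) such that ‖Δ_T‖ ≤ C·δ·σ^T for all T ≥ 0. -/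

import Mathlib

/-- Geometric decay of perturbations: with `β, γ ≥ 0`, `β + γ < 1`, step sizes
`0 ≤ η_t ≤ c·ρ₀^t` for some `c > 0` and `0 ≤ ρ₀ < 1`, and uniformly bounded
forcing terms `‖d_t‖ ≤ δ`, the sequence `Δ_0 = 0`, `Δ_1 = η_0 • d_0`,
`Δ_{t+2} = β • Δ_{t+1} + γ • Δ_t + η_{t+1} • d_{t+1}` decays geometrically:
there are `C > 0` and `σ ∈ (0,1)` with `‖Δ_T‖ ≤ C·δ·σ^T` for all `T`. -/
theorem perturbation_geometric_decay
    {E : Type*} [NormedAddCommGroup E] [NormedSpace ℝ E]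
    (β γ : ℝ) (hβ : 0 ≤ β) (hγ : 0 ≤ γ) (hβγ : β + γ < 1)
    (c : ℝ) (hc : 0 < c) (ρ₀ : ℝ) (hρ₀ : 0 ≤ ρ₀) (hρ₀' : ρ₀ < 1)
    (η : ℕ → ℝ) (hη : ∀ t, 0 ≤ η t) (hη' : ∀ t, η t ≤ c * ρ₀ ^ t)
    (δ : ℝ) (hδ : 0 < δ) (d : ℕ → E) (hd : ∀ t, ‖d t‖ ≤ δ)
    (Δ : ℕ → E) (hΔ0 : Δ 0 = 0) (hΔ1 : Δ 1 = η 0 • d 0)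
    (hΔrec : ∀ t : ℕ, Δ (t + 2) = β • Δ (t + 1) + γ • Δ t + η (t + 1) • d (t + 1)) :
    ∃ C > (0 : ℝ), ∃ σ : ℝ, 0 < σ ∧ σ < 1 ∧ ∀ T : ℕ, ‖Δ T‖ ≤ C * δ * σ ^ T := by
  set s : ℝ := β + γ with hs
  set r : ℝ := max ρ₀ ((1 + s) / 2) with hr
  have hs0 : 0 ≤ s := by positivity
  have hr0 : 0 < r := lt_of_lt_of_le (by linarith) (le_max_right _ _)
  have hr1 : r < 1 := max_lt hρ₀' (by simp only [hs]; linarith)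
  have hrρ : ρ₀ ≤ r := le_max_left _ _
  have hrs : (1 + s) / 2 ≤ r := le_max_right _ _
  have hg : s < r ^ 2 := by nlinarith [sq_nonneg (1 - s)]
  set g : ℝ := r ^ 2 - s with hgdef
  have hg0 : 0 < g := by simp [hgdef]; linarith
  set M : ℝ := c / r + c * r / g with hM
  have hM0 : 0 < M := by positivity
  have hMr : c ≤ M * r := by
    have : M * r = c + c * r ^ 2 / g := by rw [hM]; field_simp
    rw [this]
    have : 0 ≤ c * r ^ 2 / g := by positivity
    linarith
  have hMg : c * r ≤ M * g := by
    have : M * g = c * g / r + c * r := by rw [hM]; field_simp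
    rw [this]
    have : 0 ≤ c * g / r := by positivity
    linarith
  refine ⟨M, hM0, r, hr0, hr1, ?_⟩
  have key : ∀ T : ℕ, ‖Δ T‖ ≤ M * δ * r ^ T ∧ ‖Δ (T + 1)‖ ≤ M * δ * r ^ (T + 1) := by
    intro T
    induction T with
    | zero =>
      constructor
      · simp [hΔ0]; positivity
      · rw [hΔ1, norm_smul, Real.norm_of_nonneg (hη 0)]
        have h1 : η 0 * ‖d 0‖ ≤ c * δ := by
          have := hη' 0
          have := hd 0
          have := norm_nonneg (d 0)
          nlinarith [hη 0]
        calc η 0 * ‖d 0‖ ≤ c * δ := h1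
          _ ≤ M * δ * r ^ (0 + 1) := by
            simp [pow_succ]
            nlinarith
    | succ t ih =>
      obtain ⟨ih0, ih1⟩ := ih
      refine ⟨ih1, ?_⟩
      rw [hΔrec t]
      have hrt : (0:ℝ) < r ^ t := by positivity
      have hηd : ‖η (t + 1) • d (t + 1)‖ ≤ c * r ^ (t + 1) * δ := by
        rw [norm_smul, Real.norm_of_nonneg (hη (t + 1))]
        have h1 : ρ₀ ^ (t + 1) ≤ r ^ (t + 1) := pow_le_pow_left₀ hρ₀ hrρ _
        have h2 : η (t + 1) ≤ c * r ^ (t + 1) :=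
          le_trans (hη' (t + 1)) (mul_le_mul_of_nonneg_left h1 hc.le)
        have hp : (0:ℝ) ≤ c * r ^ (t + 1) := by positivity
        exact mul_le_mul h2 (hd (t + 1)) (norm_nonneg _) hp
      calc ‖β • Δ (t + 1) + γ • Δ t + η (t + 1) • d (t + 1)‖
          ≤ ‖β • Δ (t + 1)‖ + ‖γ • Δ t‖ + ‖η (t + 1) • d (t + 1)‖ := norm_add₃_le
        _ ≤ β * (M * δ * r ^ (t + 1)) + γ * (M * δ * r ^ t) + c * r ^ (t + 1) * δ := by
            rw [norm_smul, norm_smul, Real.norm_of_nonneg hβ, Real.norm_of_nonneg hγ]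
            have h1 : β * ‖Δ (t + 1)‖ ≤ β * (M * δ * r ^ (t + 1)) :=
              mul_le_mul_of_nonneg_left ih1 hβ
            have h2 : γ * ‖Δ t‖ ≤ γ * (M * δ * r ^ t) :=
              mul_le_mul_of_nonneg_left ih0 hγ
            linarith
        _ ≤ M * δ * r ^ (t + 1 + 1) := by
            have hβr : β * r + γ ≤ s := by
              have h0 : β * r ≤ β * 1 := mul_le_mul_of_nonneg_left hr1.le hβ
              rw [hs]; linarith
            have hkey : M * (β * r + γ) + c * r ≤ M * r ^ 2 := by
              have h2 : M * (β * r + γ) ≤ M * s :=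
                mul_le_mul_of_nonneg_left hβr hM0.le
              have h3 : M * g = M * r ^ 2 - M * s := by rw [hgdef]; ring
              linarith [hMg]
            have h4 : (M * (β * r + γ) + c * r) * (δ * r ^ t)
                ≤ M * r ^ 2 * (δ * r ^ t) :=
              mul_le_mul_of_nonneg_right hkey (by positivity)
            calc β * (M * δ * r ^ (t + 1)) + γ * (M * δ * r ^ t) + c * r ^ (t + 1) * δ
                = (M * (β * r + γ) + c * r) * (δ * r ^ t) := by ring
              _ ≤ M * r ^ 2 * (δ * r ^ t) := h4
              _ = M * δ * r ^ (t + 1 + 1) := by ring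
  intro T
  exact (key T).1
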